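/- Let A be a finite idempotent algebra and B_1,…,B_n two-element subuniverses of A such that for each i there exists a binary term operation f_i of A whose restriction to B_i is a semilattice operation. Then there exists a single binary term operation f of A whose restriction to every B_i, 1 ≤ i ≤ n, is a semilattice operation. -/
import Mathlib


namespace UA

/-- Terms over a signature `(ι, ar)` with `n` variables. -/
inductive Term (ι : Type) (ar : ι → ℕ) (n : ℕ) : Type where
  | var : Fin n → Term ι ar n
  | app : (i : ι) → (Fin (ar i) → Term ι ar n) → Term ι ar n

/-- Evaluation of a term in an algebra with operations `ops`. -/
def Term.eval {ι : Type} {ar : ι → ℕ} {A : Type} (ops : ∀ i : ι, (Fin (ar i) → A) → A)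
    {n : ℕ} : Term ι ar n → (Fin n → A) → A
  | .var j, x => x j
  | .app i ts, x => ops i fun k => Term.eval ops (ts k) x

variable {ι : Type} {ar : ι → ℕ} {A : Type}

/-- An algebra is idempotent if every basic operation is. -/
def Idempotent (ops : ∀ i : ι, (Fin (ar i) → A) → A) : Prop :=
  ∀ (i : ι) (x : A), ops i (fun _ => x) = x

/-- A subuniverse: a subset closed under all basic operations. -/
def IsSubuniverse (ops : ∀ i : ι, (Fin (ar i) → A) → A) (S : Set A) : Prop :=
  ∀ (i : ι) (xs : Fin (ar i) → A), (∀ k, xs k ∈ S) → ops i xs ∈ S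

/-- The subuniverse generated by `X`. -/
def Sg (ops : ∀ i : ι, (Fin (ar i) → A) → A) (X : Set A) : Set A :=
  ⋂₀ {S | IsSubuniverse ops S ∧ X ⊆ S}

/-- A tolerance: a reflexive symmetric compatible binary relation. -/
def IsTolerance (ops : ∀ i : ι, (Fin (ar i) → A) → A) (τ : A → A → Prop) : Prop :=
  (∀ x, τ x x) ∧ (∀ x y, τ x y → τ y x) ∧
  ∀ (i : ι) (xs ys : Fin (ar i) → A), (∀ k, τ (xs k) (ys k)) → τ (ops i xs) (ops i ys)

/-- A congruence: a compatible equivalence relation. -/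
def IsCongruence (ops : ∀ i : ι, (Fin (ar i) → A) → A) (θ : A → A → Prop) : Prop :=
  Equivalence θ ∧
  ∀ (i : ι) (xs ys : Fin (ar i) → A), (∀ k, θ (xs k) (ys k)) → θ (ops i xs) (ops i ys)

/-- A congruence of the subalgebra with universe `B`, viewed as a partial
equivalence relation on the big algebra whose domain is exactly `B` and which is
compatible with all operations. -/
def IsCongruenceOn (ops : ∀ i : ι, (Fin (ar i) → A) → A) (B : Set A)
    (θ : A → A → Prop) : Prop :=
  (∀ x y, θ x y → x ∈ B ∧ y ∈ B) ∧
  (∀ x ∈ B, θ x x) ∧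
  (∀ x y, θ x y → θ y x) ∧
  (∀ x y z, θ x y → θ y z → θ x z) ∧
  ∀ (i : ι) (xs ys : Fin (ar i) → A), (∀ k, θ (xs k) (ys k)) → θ (ops i xs) (ops i ys)

/-- `f` is a binary term operation of the algebra. -/
def IsTermOp2 (ops : ∀ i : ι, (Fin (ar i) → A) → A) (f : A → A → A) : Prop :=
  ∃ t : Term ι ar 2, ∀ x y, f x y = t.eval ops ![x, y]

/-- `g` is a ternary term operation of the algebra. -/
def IsTermOp3 (ops : ∀ i : ι, (Fin (ar i) → A) → A) (g : A → A → A → A) : Prop :=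
  ∃ t : Term ι ar 3, ∀ x y z, g x y z = t.eval ops ![x, y, z]

/-- Connectivity of `a` and `b` in the hypergraph `H(A)` whose hyperedges are the
nonempty proper subuniverses: a chain of hyperedges with consecutive ones
intersecting, the first containing `a`, the last containing `b`. -/
def HConnected (ops : ∀ i : ι, (Fin (ar i) → A) → A) (a b : A) : Prop :=
  ∃ L : List (Set A),
    (∀ S ∈ L, IsSubuniverse ops S ∧ S.Nonempty ∧ S ≠ Set.univ) ∧
    L.Chain' (fun S T => (S ∩ T).Nonempty) ∧
    ∃ h : L ≠ [], a ∈ L.head h ∧ b ∈ L.getLast h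


/-- `f` restricted to `S` is a semilattice operation. -/
def SemilatticeOn {A : Type} (f : A → A → A) (S : Set A) : Prop :=
  (∀ a ∈ S, f a a = a) ∧ ∀ a ∈ S, ∀ b ∈ S, f a b = f b a ∧ f a b ∈ S

/-- Auxiliary: subuniverses are closed under term evaluation. -/
lemma eval_mem (ops : ∀ i : ι, (Fin (ar i) → A) → A) {S : Set A}
    (hS : IsSubuniverse ops S) {n : ℕ} (t : Term ι ar n) (x : Fin n → A)
    (hx : ∀ j, x j ∈ S) : t.eval ops x ∈ S := by
  induction t with
  | var j => exact hx j
  | app i ts ih => exact hS i _ (fun k => ih k)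

/-- Auxiliary: term operations of an idempotent algebra are idempotent. -/
lemma eval_const (ops : ∀ i : ι, (Fin (ar i) → A) → A) (hidem : Idempotent ops)
    {n : ℕ} (t : Term ι ar n) (c : A) : t.eval ops (fun _ => c) = c := by
  induction t with
  | var j => rfl
  | app i ts ih =>
    have h : (fun k => Term.eval ops (ts k) (fun _ => c)) = fun _ => c := funext ih
    rw [Term.eval, h]; exact hidem i c

lemma termop2_idem {ops : ∀ i : ι, (Fin (ar i) → A) → A} (hidem : Idempotent ops)
    {f : A → A → A} (hf : IsTermOp2 ops f) (c : A) : f c c = c := by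
  obtain ⟨t, ht⟩ := hf
  have h : (![c, c] : Fin 2 → A) = fun _ => c := by funext j; fin_cases j <;> rfl
  rw [ht, h]; exact eval_const ops hidem t c

lemma termop2_mem {ops : ∀ i : ι, (Fin (ar i) → A) → A} {f : A → A → A}
    (hf : IsTermOp2 ops f) {S : Set A} (hS : IsSubuniverse ops S)
    {x y : A} (hx : x ∈ S) (hy : y ∈ S) : f x y ∈ S := by
  obtain ⟨t, ht⟩ := hf
  rw [ht]
  exact eval_mem ops hS t _ (by intro j; fin_cases j <;> assumption)

/-- Substitution of terms into a term. -/
def Term.subst {m n : ℕ} : Term ι ar m → (Fin m → Term ι ar n) → Term ι ar n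
  | .var j, σ => σ j
  | .app i ts, σ => .app i (fun k => (ts k).subst σ)

lemma eval_subst (ops : ∀ i : ι, (Fin (ar i) → A) → A) {m n : ℕ}
    (t : Term ι ar m) (σ : Fin m → Term ι ar n) (x : Fin n → A) :
    (t.subst σ).eval ops x = t.eval ops (fun j => (σ j).eval ops x) := by
  induction t with
  | var j => rfl
  | app i ts ih => simp only [Term.subst, Term.eval, ih]

/-- The combination `(x, y) ↦ f (g x y) (g y x)` is a term operation. -/
lemma comp_termop {ops : ∀ i : ι, (Fin (ar i) → A) → A} {f g : A → A → A}
    (hf : IsTermOp2 ops f) (hg : IsTermOp2 ops g) :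
    IsTermOp2 ops (fun x y => f (g x y) (g y x)) := by
  obtain ⟨t, ht⟩ := hf
  obtain ⟨s, hs⟩ := hg
  refine ⟨t.subst ![s, s.subst ![Term.var 1, Term.var 0]], fun x y => ?_⟩
  rw [eval_subst]
  have h : (fun j => Term.eval ops ((![s, s.subst ![Term.var 1, Term.var 0]] : Fin 2 → _) j) ![x, y])
      = ![g x y, g y x] := by
    funext j
    fin_cases j
    · show Term.eval ops s ![x, y] = g x y
      exact (hs x y).symm
    · show Term.eval ops (s.subst ![Term.var 1, Term.var 0]) ![x, y] = g y x
      rw [eval_subst]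
      have h2 : (fun j => Term.eval ops ((![Term.var 1, Term.var 0] : Fin 2 → Term ι ar 2) j) ![x, y])
          = ![y, x] := by funext j; fin_cases j <;> rfl
      rw [h2]; exact (hs y x).symm
  rw [h]; exact ht _ _

/-- Combination lemma when `f` is semilattice on `S` and `g` preserves `S`. -/
lemma slA {f g : A → A → A} {S : Set A} (hf : SemilatticeOn f S)
    (hgid : ∀ c, g c c = c) (hgS : ∀ x ∈ S, ∀ y ∈ S, g x y ∈ S) :
    SemilatticeOn (fun x y => f (g x y) (g y x)) S := by
  constructor
  · intro x hx
    simp only [hgid x]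
    exact hf.1 x hx
  · intro x hx y hy
    have hu := hgS x hx y hy
    have hv := hgS y hy x hx
    exact ⟨(hf.2 _ hu _ hv).1, (hf.2 _ hu _ hv).2⟩

/-- Combination lemma when `g` is semilattice on `S` and `f` is idempotent. -/
lemma slB {f g : A → A → A} {S : Set A} (hg : SemilatticeOn g S)
    (hfid : ∀ c, f c c = c) :
    SemilatticeOn (fun x y => f (g x y) (g y x)) S := by
  constructor
  · intro x hx
    simp only [hg.1 x hx, hfid x]
  · intro x hx y hy
    have hc := (hg.2 x hx y hy).1
    have hm := (hg.2 x hx y hy).2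
    simp only [← hc, hfid]
    exact ⟨trivial, hm⟩

/-- if each two-element subuniverse `B i` admits some binary term
operation that is semilattice on it, then one binary term operation is
semilattice on all of them simultaneously. -/
theorem stmt_9 {ι : Type} {ar : ι → ℕ} {A : Type} [Fintype A] [Nonempty A]
    (ops : ∀ i : ι, (Fin (ar i) → A) → A)
    (hidem : Idempotent ops)
    (n : ℕ) (B : Fin n → Set A)
    (hsub : ∀ i, IsSubuniverse ops (B i))
    (htwo : ∀ i, ∃ a b : A, a ≠ b ∧ B i = ({a, b} : Set A))
    (hfi : ∀ i, ∃ fi : A → A → A, IsTermOp2 ops fi ∧ SemilatticeOn fi (B i)) :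
    ∃ f : A → A → A, IsTermOp2 ops f ∧ ∀ i, SemilatticeOn f (B i) := by
  induction n with
  | zero =>
    refine ⟨fun x _ => x, ⟨Term.var 0, fun x y => rfl⟩, fun i => i.elim0⟩
  | succ n ih =>
    obtain ⟨f, hf, hfsl⟩ := ih (fun j => B j.castSucc) (fun j => hsub _)
      (fun j => htwo _) (fun j => hfi _)
    obtain ⟨g, hg, hgsl⟩ := hfi (Fin.last n)
    refine ⟨fun x y => f (g x y) (g y x), comp_termop hf hg, ?_⟩
    intro i
    refine Fin.lastCases ?_ ?_ i
    · exact slB hgsl (termop2_idem hidem hf)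
    · intro j
      exact slA (hfsl j) (termop2_idem hidem hg)
        (fun x hx y hy => termop2_mem hg (hsub j.castSucc) hx hy)


end UA
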